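/- In a directed weighted graph g with rumor seed set a_r and positive seed union X, suppose a node u satisfies dis(a_r, u) ≤ dis(X, u) and dis(a_r, u) < ∞, and let P = (v₁ = v_r, v₂, ..., v_l = u) be a shortest weighted path from some v_r ∈ a_r achieving dis(a_r, u). Then every node v_j on P satisfies dis(a_r, v_j) = dis(v₁, v_j) ≤ dis(X, v_j), i.e., every node on a shortest rumor path to a rumor-winning node is itself rumor-winning. -/

import Mathlib

/-- Cost of a walk given as its full list of vertices, in a directed graph with
edge weights `w` (`⊤` meaning no edge). -/
def chainCost {V : Type*} (w : V → V → ℕ∞) : List V → ℕ∞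
  | [] => 0
  | [_] => 0
  | x :: y :: rest => w x y + chainCost w (y :: rest)

/-- Weighted shortest-path distance from `u` to `v` (`⊤` if unreachable). -/
noncomputable def wdist {V : Type*} (w : V → V → ℕ∞) (u v : V) : ℕ∞ :=
  ⨅ l : {l : List V // l.head? = some u ∧ l.getLast? = some v}, chainCost w l.1

/-- Weighted shortest-path distance from a set `S` to `u` (`⊤` for `S = ∅`). -/
noncomputable def sdist {V : Type*} [DecidableEq V] (w : V → V → ℕ∞) (S : Finset V) (u : V) : ℕ∞ :=
  S.inf fun s => wdist w s u


lemma chainCost_append {V : Type*} (w : V → V → ℕ∞) (p : List V) (v : V) (q : List V) :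
    chainCost w (p ++ v :: q) = chainCost w (p ++ [v]) + chainCost w (v :: q) := by
  induction p with
  | nil => simp [chainCost]
  | cons x p ih =>
    cases p with
    | nil => simp [chainCost, add_assoc]
    | cons y p' =>
      simp only [List.cons_append, chainCost, List.append_eq] at *
      rw [ih, add_assoc]

lemma wdist_le_chainCost {V : Type*} (w : V → V → ℕ∞) {a b : V} {l : List V}
    (h1 : l.head? = some a) (h2 : l.getLast? = some b) :
    wdist w a b ≤ chainCost w l :=
  iInf_le (fun l : {l : List V // l.head? = some a ∧ l.getLast? = some b} => chainCost w l.1)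
    ⟨l, h1, h2⟩

lemma wdist_exists {V : Type*} (w : V → V → ℕ∞) {a b : V} (h : wdist w a b ≠ ⊤) :
    ∃ l : List V, l.head? = some a ∧ l.getLast? = some b ∧ chainCost w l = wdist w a b := by
  have hlt : wdist w a b < wdist w a b + 1 := by
    rw [ENat.lt_add_one_iff h]
  rw [wdist] at hlt
  obtain ⟨⟨l, h1, h2⟩, hl⟩ := iInf_lt_iff.mp hlt
  refine ⟨l, h1, h2, le_antisymm ?_ (wdist_le_chainCost w h1 h2)⟩
  exact (ENat.lt_add_one_iff h).mp hl

/-- Splicing a walk ending at `v` with a walk `v :: q`. -/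
lemma splice_cost {V : Type*} (w : V → V → ℕ∞) {a v : V} {l : List V}
    (h1 : l.head? = some a) (h2 : l.getLast? = some v) (q : List V) :
    ∃ L : List V, L.head? = some a ∧ L.getLast? = (v :: q).getLast? ∧
      chainCost w L = chainCost w l + chainCost w (v :: q) := by
  have hne : l ≠ [] := by rintro rfl; simp at h2
  have hv : l.getLast hne = v := by
    rw [l.getLast?_eq_getLast hne] at h2; exact Option.some_injective _ h2
  obtain ⟨d, hd⟩ : ∃ d, l = d ++ [v] :=
    ⟨l.dropLast, by rw [← hv]; exact (l.dropLast_append_getLast hne).symm⟩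
  subst hd
  refine ⟨d ++ v :: q, ?_, ?_, chainCost_append w d v q⟩
  · rw [← h1]; simp [List.head?_append]
  · obtain ⟨z, hz⟩ : ∃ z, (v :: q).getLast? = some z :=
      ⟨_, List.getLast?_eq_getLast (List.cons_ne_nil _ _)⟩
    rw [List.getLast?_append, hz]; rfl

/-- Triangle-type inequality with a fixed walk `v :: q` ending at `u`. -/
lemma sdist_le_sdist_add {V : Type*} [DecidableEq V] (w : V → V → ℕ∞) (S : Finset V)
    {v u : V} (q : List V) (hq : (v :: q).getLast? = some u) :
    sdist w S u ≤ sdist w S v + chainCost w (v :: q) := by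
  rcases S.eq_empty_or_nonempty with rfl | hS
  · simp [sdist]
  obtain ⟨s, hs, hinf⟩ := S.exists_mem_eq_inf hS (fun s => wdist w s v)
  simp only [sdist]
  rw [hinf]
  by_cases htop : wdist w s v = ⊤
  · simp [htop]
  obtain ⟨l, h1, h2, hc⟩ := wdist_exists w htop
  obtain ⟨L, hL1, hL2, hLc⟩ := splice_cost w h1 h2 q
  rw [hq] at hL2
  calc sdist w S u ≤ wdist w s u := Finset.inf_le hs
    _ ≤ chainCost w L := wdist_le_chainCost w hL1 hL2
    _ = wdist w s v + chainCost w (v :: q) := by rw [hLc, hc]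

/-- every node on a shortest weighted path from the rumor seeds to a
rumor-winning node is itself rumor-winning. -/
theorem shortest_rumor_path_nodes_rumor_winning {V : Type*} [DecidableEq V] [Fintype V]
    (w : V → V → ℕ∞) (hw : ∀ x y, 1 ≤ w x y)
    (ar X : Finset V) (u vr : V) (hvr : vr ∈ ar)
    (hwin : sdist w ar u ≤ sdist w X u) (hfin : sdist w ar u < ⊤)
    (l : List V) (hhead : l.head? = some vr) (hlast : l.getLast? = some u)
    (hshort : chainCost w l = sdist w ar u) :
    ∀ vj ∈ l, sdist w ar vj = wdist w vr vj ∧ wdist w vr vj ≤ sdist w X vj := by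
  intro vj hj
  obtain ⟨p, q, rfl⟩ := List.append_of_mem hj
  have hsplit : chainCost w (p ++ vj :: q) = chainCost w (p ++ [vj]) + chainCost w (vj :: q) :=
    chainCost_append w p vj q
  set A := chainCost w (p ++ [vj]) with hA
  set B := chainCost w (vj :: q) with hB
  have hAB : A + B = sdist w ar u := by rw [← hsplit, hshort]
  have hBfin : B ≠ ⊤ := by
    intro h; rw [h, add_top] at hAB; rw [← hAB] at hfin; exact (lt_irrefl _ hfin)
  have hheadp : (p ++ [vj]).head? = some vr := by
    rw [← hhead]; simp [List.head?_append]
  have hlastp : (p ++ [vj]).getLast? = some vj := by simp [List.getLast?_append]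
  have hlastq : (vj :: q).getLast? = some u := by
    obtain ⟨z, hz⟩ : ∃ z, (vj :: q).getLast? = some z :=
      ⟨_, List.getLast?_eq_getLast (List.cons_ne_nil _ _)⟩
    rw [← hlast, List.getLast?_append, hz]; rfl
  have hAw : wdist w vr vj ≤ A := wdist_le_chainCost w hheadp hlastp
  have hwa : sdist w ar vj ≤ wdist w vr vj := Finset.inf_le hvr
  -- Claim 1 : A ≤ sdist w ar vj
  have h1 : A ≤ sdist w ar vj := by
    by_contra hlt
    push_neg at hlt
    have := calc sdist w ar u ≤ sdist w ar vj + B := sdist_le_sdist_add w ar q hlastq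
      _ < A + B := WithTop.add_lt_add_right hBfin hlt
      _ = sdist w ar u := hAB
    exact lt_irrefl _ this
  -- Claim 2 : wdist w vr vj ≤ sdist w X vj
  have h2 : wdist w vr vj ≤ sdist w X vj := by
    by_contra hlt
    push_neg at hlt
    have := calc sdist w X u ≤ sdist w X vj + B := sdist_le_sdist_add w X q hlastq
      _ < wdist w vr vj + B := WithTop.add_lt_add_right hBfin hlt
      _ ≤ A + B := add_le_add_left hAw B
      _ = sdist w ar u := hAB
      _ ≤ sdist w X u := hwin
    exact lt_irrefl _ this
  exact ⟨le_antisymm hwa (hAw.trans h1), h2⟩
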